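/- For integers s,t ≥ 2 and n ≥ s+t-2, the generalized Ramsey number f_{s+t-2}(n,s,t) equals g(n,s,t). -/

import Mathlib

/-- `gRam n s t` is the least `N` such that every graph on `N` vertices contains an
`n`-element vertex set `U` which does not contain both a clique of size `s` and an
independent set of size `t`. -/
noncomputable def gRam (n s t : ℕ) : ℕ :=
  sInf {N | ∀ G : SimpleGraph (Fin N), ∃ U : Finset (Fin N), U.card = n ∧
    ¬((∃ S ⊆ U, G.IsNClique s S) ∧ (∃ T ⊆ U, Gᶜ.IsNClique t T))}

/-- `fgen k n s t` is the least `N` such that for every red-blue coloring (red = `true`,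
blue = `false`) of the `k`-subsets of `Fin N` there is an `n`-set `A` such that either every
`s`-subset of `A` lies in some red `k`-subset, or every `t`-subset of `A` lies in some blue
`k`-subset. -/
noncomputable def fgen (k n s t : ℕ) : ℕ :=
  sInf {N | ∀ χ : Finset (Fin N) → Bool, ∃ A : Finset (Fin N), A.card = n ∧
    ((∀ S ⊆ A, S.card = s → ∃ K : Finset (Fin N), S ⊆ K ∧ K.card = k ∧ χ K = true) ∨
     (∀ T ⊆ A, T.card = t → ∃ K : Finset (Fin N), T ⊆ K ∧ K.card = k ∧ χ K = false))}

theorem stmt0 (s t n : ℕ) (hs : 2 ≤ s) (ht : 2 ≤ t) (hn : s + t - 2 ≤ n) :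
    fgen (s + t - 2) n s t = gRam n s t := by
  have hset : {N | ∀ χ : Finset (Fin N) → Bool, ∃ A : Finset (Fin N), A.card = n ∧
      ((∀ S ⊆ A, S.card = s → ∃ K : Finset (Fin N), S ⊆ K ∧ K.card = s + t - 2 ∧ χ K = true) ∨
       (∀ T ⊆ A, T.card = t → ∃ K : Finset (Fin N), T ⊆ K ∧ K.card = s + t - 2 ∧ χ K = false))}
      = {N | ∀ G : SimpleGraph (Fin N), ∃ U : Finset (Fin N), U.card = n ∧
      ¬((∃ S ⊆ U, G.IsNClique s S) ∧ (∃ T ⊆ U, Gᶜ.IsNClique t T))} := by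
    ext N
    simp only [Set.mem_setOf_eq]
    constructor
    · -- P_f → P_g
      intro hf G
      classical
      obtain ⟨A, hAcard, hAlt⟩ :=
        hf (fun K => if (∃ Q ⊆ K, G.IsNClique s Q) then false else true)
      refine ⟨A, hAcard, ?_⟩
      rintro ⟨⟨Q, hQA, hQ⟩, ⟨I, hIA, hI⟩⟩
      rcases hAlt with h1 | h2
      · obtain ⟨K, hQK, hKcard, hKtrue⟩ := h1 Q hQA hQ.2
        rw [if_pos ⟨Q, hQK, hQ⟩] at hKtrue
        exact absurd hKtrue (by simp)
      · obtain ⟨K, hIK, hKcard, hKfalse⟩ := h2 I hIA hI.2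
        by_cases hex : ∃ Q' ⊆ K, G.IsNClique s Q'
        · obtain ⟨Q', hQ'K, hQ'⟩ := hex
          have hinter : (Q' ∩ I).card ≤ 1 := by
            refine Finset.card_le_one.2 ?_
            intro a ha b hb
            by_contra hab
            have ha' := Finset.mem_inter.1 ha
            have hb' := Finset.mem_inter.1 hb
            have hadj := hQ'.1 (by exact_mod_cast ha'.1) (by exact_mod_cast hb'.1) hab
            have hnadj := hI.1 (by exact_mod_cast ha'.2) (by exact_mod_cast hb'.2) hab
            exact ((SimpleGraph.compl_adj _ _ _).1 hnadj).2 hadj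
          have hsd : (Q' \ I).card ≤ K.card - I.card := by
            have hsub : Q' \ I ⊆ K \ I := Finset.sdiff_subset_sdiff hQ'K le_rfl
            calc (Q' \ I).card ≤ (K \ I).card := Finset.card_le_card hsub
              _ = K.card - I.card := Finset.card_sdiff_of_subset hIK
          have hqc : (Q' ∩ I).card + (Q' \ I).card = Q'.card :=
            Finset.card_inter_add_card_sdiff _ _
          have h1 := hQ'.2
          have h2 := hI.2
          omega
        · rw [if_neg hex] at hKfalse
          exact absurd hKfalse (by simp)
    · -- P_g → P_f
      intro hg χ
      classical
      let G : SimpleGraph (Fin N) :=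
        { Adj := fun u v => u ≠ v ∧ ∃ S : Finset (Fin N), u ∈ S ∧ v ∈ S ∧ S.card = s ∧
            ∀ K, S ⊆ K → K.card = s + t - 2 → χ K = false
          symm := ⟨by
            rintro u v ⟨h, S, hu, hv, hc, hb⟩
            exact ⟨h.symm, S, hv, hu, hc, hb⟩⟩
          loopless := ⟨fun u h => h.1 rfl⟩ }
      obtain ⟨U, hUcard, hU⟩ := hg G
      refine ⟨U, hUcard, ?_⟩
      by_contra hcon
      push_neg at hcon
      obtain ⟨h1, h2⟩ := hcon
      obtain ⟨S, hSU, hScard, hSblue⟩ := h1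
      obtain ⟨T, hTU, hTcard, hTred⟩ := h2
      have hkN : s + t - 2 ≤ N := by
        have : U.card ≤ N := by
          simpa using Finset.card_le_univ U
        omega
      apply hU
      constructor
      · refine ⟨S, hSU, ⟨?_, hScard⟩⟩
        intro a ha b hb hab
        exact ⟨hab, S, by exact_mod_cast ha, by exact_mod_cast hb, hScard,
          fun K hK hKc => by
            have := hSblue K hK hKc
            simpa using this⟩
      · refine ⟨T, hTU, ⟨?_, hTcard⟩⟩
        intro a ha b hb hab
        refine (SimpleGraph.compl_adj _ _ _).2 ⟨hab, ?_⟩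
        rintro ⟨-, S', haS', hbS', hS'card, hS'blue⟩
        have h2le : 2 ≤ (S' ∩ T).card := by
          have hsub : ({a, b} : Finset (Fin N)) ⊆ S' ∩ T := by
            intro x hx
            rcases Finset.mem_insert.1 hx with rfl | hx
            · exact Finset.mem_inter.2 ⟨haS', by exact_mod_cast ha⟩
            · rw [Finset.mem_singleton.1 hx]
              exact Finset.mem_inter.2 ⟨hbS', by exact_mod_cast hb⟩
          calc 2 = ({a, b} : Finset (Fin N)).card := (Finset.card_pair hab).symm
            _ ≤ (S' ∩ T).card := Finset.card_le_card hsub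
        have hun : (S' ∪ T).card + (S' ∩ T).card = S'.card + T.card :=
          Finset.card_union_add_card_inter _ _
        have hcardle : (S' ∪ T).card ≤ s + t - 2 := by omega
        obtain ⟨K, hK, hKcard⟩ :=
          Finset.exists_superset_card_eq hcardle (by simpa using hkN)
        have hb1 := hS'blue K (Finset.subset_union_left.trans hK) hKcard
        have hb2 := hTred K (Finset.subset_union_right.trans hK) hKcard
        simp [hb1] at hb2
  rw [fgen, gRam, hset]
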